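/- For every α ∈ ℂ one has the identity of polynomials S_α⁰ 1 = 2α (α − α_{1,2})(α − α_{2,1}) φ₂ in R, where 1 denotes the constant polynomial 1. -/

import Mathlib

open MvPolynomial

noncomputable section

/-- The polynomial ring `ℂ[(φ_n)_{n ≥ 1}]`, with `n ↦ φ_n`. -/
abbrev BFockRing : Type := MvPolynomial ℕ ℂ

/-- Heisenberg operators `A_n` (boundary version). -/
def Aop : ℤ → BFockRing → BFockRing := fun n p =>
  if 0 < n then (Complex.I / 2) • pderiv n.toNat p
  else if n < 0 then
    (Complex.I / 2) •
      (pderiv (-n).toNat p - ((2 * (-n) : ℤ) : ℂ) • (X (-n).toNat * p))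
  else 0

/-- Sugawara operator `L_{-n}^{0,α}` for `n ≥ 1`. -/
def Lop (γ : ℝ) (α : ℂ) (n : ℕ) (p : BFockRing) : BFockRing :=
  (Complex.I * (α + ((n : ℂ) - 1) * ((γ : ℂ) / 2 + 2 / (γ : ℂ)))) • Aop (-(n : ℤ)) p +
    ∑ᶠ m ∈ {m : ℤ | m ≠ 0 ∧ m ≠ -(n : ℤ)}, Aop (-(n : ℤ) - m) (Aop m p)

/-- `S_α⁰ = α² L_{-2}^{0,α} + (L_{-1}^{0,α})²`. -/
def Sop (γ : ℝ) (α : ℂ) (p : BFockRing) : BFockRing :=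
  α ^ 2 • Lop γ α 2 p + Lop γ α 1 (Lop γ α 1 p)

end

/- Auxiliary lemmas -/

section lemmas

lemma Aop_zero_arg (n : ℤ) : Aop n 0 = 0 := by
  unfold Aop; split_ifs <;> simp

lemma Aop_pos (k : ℕ) (hk : 0 < k) (p : BFockRing) :
    Aop (k : ℤ) p = (Complex.I / 2) • pderiv k p := by
  unfold Aop
  rw [if_pos (by exact_mod_cast hk)]
  simp

lemma Aop_neg (k : ℕ) (hk : 0 < k) (p : BFockRing) :
    Aop (-(k : ℤ)) p =
      (Complex.I / 2) • (pderiv k p - ((2 * k : ℂ)) • (X k * p)) := by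
  unfold Aop
  rw [if_neg (by omega), if_pos (by omega)]
  norm_num

lemma Aop_pos_one (k : ℕ) (hk : 0 < k) : Aop (k : ℤ) (1 : BFockRing) = 0 := by
  simp [Aop_pos k hk]

lemma Aop_neg_one (k : ℕ) (hk : 0 < k) :
    Aop (-(k : ℤ)) (1 : BFockRing) = (-(Complex.I * k)) • X k := by
  rw [Aop_neg k hk]
  simp [smul_smul]
  ring_nf

lemma L1_one (γ : ℝ) (α : ℂ) : Lop γ α 1 1 = α • X 1 := by
  unfold Lop
  have h2 : ∑ᶠ m ∈ {m : ℤ | m ≠ 0 ∧ m ≠ -((1:ℕ) : ℤ)}, Aop (-((1:ℕ) : ℤ) - m) (Aop m 1) = 0 := by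
    apply finsum_mem_of_eqOn_zero
    rintro m ⟨hm0, hm1⟩
    rcases lt_or_gt_of_ne hm0 with hneg | hpos
    · obtain ⟨k, rfl⟩ : ∃ k : ℕ, m = -(k : ℤ) :=
        ⟨(-m).toNat, by omega⟩
      have hk : 0 < k := by omega
      have hk1 : k ≠ 1 := by
        intro h; apply hm1; simp [h]
      show Aop (-((1:ℕ) : ℤ) - -(k : ℤ)) (Aop (-(k : ℤ)) 1) = 0
      rw [Aop_neg_one k hk]
      have hidx : (-((1:ℕ) : ℤ) - -(k : ℤ)) = ((k - 1 : ℕ) : ℤ) := by push_cast; omega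
      rw [hidx, Aop_pos (k - 1) (by omega)]
      rw [Derivation.map_smul, pderiv_X_of_ne (show k ≠ k - 1 by omega)]
      simp
    · obtain ⟨k, rfl⟩ : ∃ k : ℕ, m = (k : ℤ) := ⟨m.toNat, by omega⟩
      show Aop (-((1:ℕ) : ℤ) - (k : ℤ)) (Aop ((k : ℤ)) 1) = 0
      rw [Aop_pos_one k (by exact_mod_cast hpos), Aop_zero_arg]
  rw [h2]
  have h1 : Aop (-((1:ℕ) : ℤ)) (1 : BFockRing) = (-Complex.I) • X 1 := by
    simpa using Aop_neg_one 1 one_pos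
  rw [h1, smul_smul]
  push_cast
  ring_nf
  rw [Complex.I_sq]
  ring_nf

end lemmas

section lemmas2

lemma L2_one (γ : ℝ) (α : ℂ) :
    Lop γ α 2 1 = (2 * (α + ((γ : ℂ) / 2 + 2 / (γ : ℂ)))) • X 2
      + ((1 : ℂ)/2) • 1 - X 1 * X 1 := by
  unfold Lop
  have h2 : ∑ᶠ m ∈ {m : ℤ | m ≠ 0 ∧ m ≠ -((2:ℕ) : ℤ)}, Aop (-((2:ℕ) : ℤ) - m) (Aop m 1)
      = ((1 : ℂ)/2) • 1 - X 1 * X 1 := by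
    rw [finsum_mem_eq_sum_of_subset _ (t := {(-1 : ℤ)}) ?h1 ?h2]
    · rw [Finset.sum_singleton]
      show Aop (-((2:ℕ) : ℤ) - (-1)) (Aop (-1) 1) = _
      have e1 : Aop (-1 : ℤ) (1 : BFockRing) = (-Complex.I) • X 1 := by
        simpa using Aop_neg_one 1 one_pos
      have e2 : (-((2:ℕ) : ℤ) - (-1)) = -((1:ℕ) : ℤ) := by norm_num
      rw [e1, e2, Aop_neg 1 one_pos]
      rw [Derivation.map_smul, pderiv_X_self]
      rw [smul_sub, smul_smul, smul_smul]
      push_cast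
      rw [mul_smul_comm, smul_smul]
      ring_nf
      rw [Complex.I_sq]
      module
    case h1 =>
      rintro m ⟨⟨hm0, hm2⟩, hsupp⟩
      rw [Function.mem_support] at hsupp
      by_contra hmt
      apply hsupp
      simp only [Finset.coe_singleton, Finset.mem_coe, Set.mem_singleton_iff, Finset.mem_singleton] at hmt
      rcases lt_or_gt_of_ne hm0 with hneg | hpos
      · obtain ⟨k, rfl⟩ : ∃ k : ℕ, m = -(k : ℤ) := ⟨(-m).toNat, by omega⟩
        have hk : 3 ≤ k := by
          rcases Nat.lt_or_ge k 3 with h | h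
          · interval_cases k <;> simp_all
          · exact h
        show Aop (-((2:ℕ) : ℤ) - -(k : ℤ)) (Aop (-(k : ℤ)) 1) = 0
        rw [Aop_neg_one k (by omega)]
        have hidx : (-((2:ℕ) : ℤ) - -(k : ℤ)) = ((k - 2 : ℕ) : ℤ) := by push_cast; omega
        rw [hidx, Aop_pos (k - 2) (by omega)]
        rw [Derivation.map_smul, pderiv_X_of_ne (show k ≠ k - 2 by omega)]
        simp
      · obtain ⟨k, rfl⟩ : ∃ k : ℕ, m = (k : ℤ) := ⟨m.toNat, by omega⟩
        show Aop (-((2:ℕ) : ℤ) - (k : ℤ)) (Aop ((k : ℤ)) 1) = 0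
        rw [Aop_pos_one k (by exact_mod_cast hpos), Aop_zero_arg]
    case h2 =>
      intro m hm
      simp only [Finset.coe_singleton, Set.mem_singleton_iff] at hm
      subst hm
      constructor <;> norm_num
  rw [h2]
  have h1 : Aop (-((2:ℕ) : ℤ)) (1 : BFockRing) = (-(Complex.I * 2)) • X 2 := by
    simpa using Aop_neg_one 2 two_pos
  rw [h1, smul_smul]
  push_cast
  ring_nf
  rw [Complex.I_sq]
  ring_nf

end lemmas2

section lemmas3

lemma L1_aX1 (γ : ℝ) (α : ℂ) :
    Lop γ α 1 (α • X 1) =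
      (-(α^2/2)) • 1 + (α^2) • (X 1 * X 1) + (2*α) • X 2 := by
  unfold Lop
  have h2 : ∑ᶠ m ∈ {m : ℤ | m ≠ 0 ∧ m ≠ -((1:ℕ) : ℤ)},
      Aop (-((1:ℕ) : ℤ) - m) (Aop m (α • X 1)) = (2*α) • X 2 := by
    rw [finsum_mem_eq_sum_of_subset _ (t := {(1 : ℤ), (-2 : ℤ)}) ?h1 ?h2]
    · rw [Finset.sum_pair (by norm_num)]
      have e1 : Aop (1 : ℤ) (α • X 1) = ((Complex.I * α)/2) • 1 := by
        have := Aop_pos 1 one_pos (α • X 1)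
        rw [show ((1:ℕ):ℤ) = 1 by norm_num] at this
        rw [this, Derivation.map_smul, pderiv_X_self, smul_smul]
        ring_nf
      have t1 : Aop (-((1:ℕ) : ℤ) - 1) (Aop 1 (α • X 1)) = α • X 2 := by
        rw [e1, show (-((1:ℕ):ℤ) - 1) = -((2:ℕ):ℤ) by norm_num, Aop_neg 2 two_pos]
        rw [Derivation.map_smul]
        simp only [pderiv_one, smul_zero, map_one]
        rw [zero_sub, mul_smul_comm, mul_one, smul_neg, smul_smul, smul_smul]
        match_scalars
        push_cast
        ring_nf
        rw [Complex.I_sq]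
        ring
      have t2 : Aop (-((1:ℕ) : ℤ) - (-2)) (Aop (-2 : ℤ) (α • X 1)) = α • X 2 := by
        have e2 : Aop (-2 : ℤ) (α • X 1) = (-(2*Complex.I*α)) • (X 2 * X 1) := by
          have := Aop_neg 2 two_pos (α • X 1)
          rw [show (-((2:ℕ):ℤ)) = -2 by norm_num] at this
          rw [this, Derivation.map_smul, pderiv_X_of_ne (by omega)]
          rw [smul_zero, zero_sub, smul_neg, mul_smul_comm, smul_smul, smul_smul]
          match_scalars
          push_cast
          ring
        rw [e2, show (-((1:ℕ):ℤ) - (-2)) = ((1:ℕ):ℤ) by norm_num, Aop_pos 1 one_pos]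
        rw [Derivation.map_smul, Derivation.leibniz, pderiv_X_self, pderiv_X_of_ne (by omega)]
        rw [smul_zero, add_zero, smul_eq_mul, mul_one, smul_smul]
        match_scalars
        push_cast
        ring_nf
        rw [Complex.I_sq]
        ring
      rw [t1, t2]
      module
    case h1 =>
      rintro m ⟨⟨hm0, hm1⟩, hsupp⟩
      rw [Function.mem_support] at hsupp
      by_contra hmt
      apply hsupp
      simp only [Finset.coe_insert, Finset.coe_singleton, Set.mem_insert_iff,
        Set.mem_singleton_iff, not_or] at hmt
      obtain ⟨hmt1, hmt2⟩ := hmt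
      rcases lt_or_gt_of_ne hm0 with hneg | hpos
      · obtain ⟨k, rfl⟩ : ∃ k : ℕ, m = -(k : ℤ) := ⟨(-m).toNat, by omega⟩
        have hk : 3 ≤ k := by omega
        show Aop (-((1:ℕ) : ℤ) - -(k : ℤ)) (Aop (-(k : ℤ)) (α • X 1)) = 0
        rw [Aop_neg k (by omega), Derivation.map_smul, pderiv_X_of_ne (by omega)]
        have hidx : (-((1:ℕ) : ℤ) - -(k : ℤ)) = ((k - 1 : ℕ) : ℤ) := by push_cast; omega
        rw [hidx, Aop_pos (k - 1) (by omega)]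
        simp only [smul_zero, zero_sub, map_neg, Derivation.map_smul, mul_smul_comm,
          Derivation.leibniz, pderiv_X_of_ne (show (1:ℕ) ≠ k - 1 by omega),
          pderiv_X_of_ne (show k ≠ k - 1 by omega)]
        simp
      · obtain ⟨k, rfl⟩ : ∃ k : ℕ, m = (k : ℤ) := ⟨m.toNat, by omega⟩
        have hk : 2 ≤ k := by omega
        show Aop (-((1:ℕ) : ℤ) - (k : ℤ)) (Aop ((k : ℤ)) (α • X 1)) = 0
        rw [Aop_pos k (by omega), Derivation.map_smul,
          pderiv_X_of_ne (show (1:ℕ) ≠ k by omega)]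
        simp [Aop_zero_arg]
    case h2 =>
      intro m hm
      simp only [Finset.coe_insert, Finset.coe_singleton, Set.mem_insert_iff,
        Set.mem_singleton_iff] at hm
      rcases hm with rfl | rfl <;> constructor <;> norm_num
  rw [h2]
  rw [Aop_neg 1 one_pos, Derivation.map_smul, pderiv_X_self]
  simp only [mul_smul_comm, smul_sub, smul_smul, mul_one]
  match_scalars
  all_goals (ring_nf; try rw [Complex.I_sq]; try ring)

end lemmas3


theorem stmt14 (γ : ℝ) (hγ0 : 0 < γ) (hγ2 : γ < 2) (α : ℂ) :
    Sop γ α 1 =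
      C (2 * α * (α - (-2 / (γ : ℂ))) * (α - (-(γ : ℂ) / 2))) * X 2 := by
  have hγ : (γ : ℂ) ≠ 0 := by
    exact_mod_cast Complex.ofReal_ne_zero.mpr hγ0.ne'
  rw [Sop, L2_one, L1_one, L1_aX1, ← smul_eq_C_mul]
  match_scalars
  · field_simp
    ring
  · field_simp
    ring
  · ring
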